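/- Let α_0, …, α_m be elements of O_K, let p_n, q_n (0 ≤ n ≤ m) be the convergent numerators and denominators of the finite continued fraction [α_0, …, α_m], and set Δ = (p_m − q_{m-1})² + 4·q_m·p_{m-1}. If Δ > 0 and Δ is not the square of an element of K, then the purely periodic continued fraction [overline(α_0, …, α_m)] converges to a real root of q_m·x² − (p_m − q_{m-1})·x − p_{m-1} = 0, and the reversed purely periodic continued fraction [overline(α_m, …, α_0)] also converges to a real number, namely to a root of −p_{m-1}·x² + (p_m − q_{m-1})·x + q_m = 0. -/

import Mathlib

open Filter Topology

/-- Numerator continuants: `cfP a (n+1) = Pₙ`, with `cfP a 0 = P₋₁ = 1`. -/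
def cfP {R : Type*} [CommRing R] (a : ℕ → R) : ℕ → R
  | 0 => 1
  | 1 => a 0
  | n + 2 => a (n + 1) * cfP a (n + 1) + cfP a n

/-- Denominator continuants: `cfQ a (n+1) = Qₙ`, with `cfQ a 0 = Q₋₁ = 0`. -/
def cfQ {R : Type*} [CommRing R] (a : ℕ → R) : ℕ → R
  | 0 => 0
  | 1 => 1
  | n + 2 => a (n + 1) * cfQ a (n + 1) + cfQ a n

/-- The sequence `a` is ultimately periodic. -/
def UltimatelyPeriodic {α : Type*} (a : ℕ → α) : Prop :=
  ∃ N k : ℕ, 1 ≤ k ∧ ∀ n > N, a (n + k) = a n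

/-- The continued fraction `[a₀, a₁, …]` converges to `ξ`:
`Qₙ ≠ 0` for all sufficiently large `n` and `Pₙ/Qₙ → ξ`. -/
def CFConvergesTo (a : ℕ → ℝ) (ξ : ℝ) : Prop :=
  (∃ N, ∀ n ≥ N, cfQ a (n + 1) ≠ 0) ∧
    Tendsto (fun n => cfP a (n + 1) / cfQ a (n + 1)) atTop (nhds ξ)

section Aux

lemma two_step {P : ℕ → Prop} (h0 : P 0) (h1 : P 1)
    (hs : ∀ n, P n → P (n + 1) → P (n + 2)) : ∀ n, P n := by
  have h : ∀ n, P n ∧ P (n + 1) := by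
    intro n
    induction n with
    | zero => exact ⟨h0, h1⟩
    | succ k ih => exact ⟨ih.2, hs k ih.1 ih.2⟩
  exact fun n => (h n).1

variable {R : Type*} [CommRing R]

@[simp] lemma cfP_zero (a : ℕ → R) : cfP a 0 = 1 := rfl
@[simp] lemma cfP_one (a : ℕ → R) : cfP a 1 = a 0 := rfl
lemma cfP_two (a : ℕ → R) (n : ℕ) :
    cfP a (n + 2) = a (n + 1) * cfP a (n + 1) + cfP a n := rfl
@[simp] lemma cfQ_zero (a : ℕ → R) : cfQ a 0 = 0 := rfl
@[simp] lemma cfQ_one (a : ℕ → R) : cfQ a 1 = 1 := rfl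
lemma cfQ_two (a : ℕ → R) (n : ℕ) :
    cfQ a (n + 2) = a (n + 1) * cfQ a (n + 1) + cfQ a n := rfl

lemma cfP_congr : ∀ (n : ℕ) (a a' : ℕ → R), (∀ i < n, a i = a' i) → cfP a n = cfP a' n := by
  refine two_step ?_ ?_ ?_
  · intro a a' _; rfl
  · intro a a' h; simpa using h 0 (by norm_num)
  · intro n ih1 ih2 a a' h
    rw [cfP_two, cfP_two, h (n+1) (by omega),
      ih2 a a' (fun i hi => h i (by omega)), ih1 a a' (fun i hi => h i (by omega))]

lemma cfQ_congr : ∀ (n : ℕ) (a a' : ℕ → R), (∀ i < n, a i = a' i) → cfQ a n = cfQ a' n := by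
  refine two_step ?_ ?_ ?_
  · intro a a' _; rfl
  · intro a a' h; rfl
  · intro n ih1 ih2 a a' h
    rw [cfQ_two, cfQ_two, h (n+1) (by omega),
      ih2 a a' (fun i hi => h i (by omega)), ih1 a a' (fun i hi => h i (by omega))]

lemma cfP_map {S : Type*} [CommRing S] (f : R →+* S) (a : ℕ → R) :
    ∀ n, cfP (fun i => f (a i)) n = f (cfP a n) := by
  refine two_step ?_ ?_ ?_
  · simp
  · simp
  · intro n ih1 ih2
    rw [cfP_two, cfP_two, ih1, ih2]
    simp [map_add, map_mul]

lemma cfQ_map {S : Type*} [CommRing S] (f : R →+* S) (a : ℕ → R) :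
    ∀ n, cfQ (fun i => f (a i)) n = f (cfQ a n) := by
  refine two_step ?_ ?_ ?_
  · simp
  · simp
  · intro n ih1 ih2
    rw [cfQ_two, cfQ_two, ih1, ih2]
    simp [map_add, map_mul]

lemma cfQ_shift (a : ℕ → R) : ∀ n, cfQ a (n + 1) = cfP (fun i => a (i + 1)) n := by
  refine two_step ?_ ?_ ?_
  · rfl
  · simp [cfQ_two]
  · intro n ih1 ih2
    rw [show n + 2 + 1 = (n + 1) + 2 from rfl, cfQ_two, cfP_two, ih1, ih2]

lemma cfP_left_rec (a : ℕ → R) :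
    ∀ n, cfP a (n + 2) = a 0 * cfP (fun i => a (i + 1)) (n + 1) + cfP (fun i => a (i + 2)) n := by
  refine two_step ?_ ?_ ?_
  · simp [cfP_two]; ring
  · simp [cfP_two]; ring
  · intro n ih1 ih2
    rw [show n + 2 + 2 = (n + 2) + 2 from rfl, cfP_two, ih1, ih2]
    rw [cfP_two (fun i => a (i + 1)) (n + 1), cfP_two (fun i => a (i + 2)) n]
    ring

lemma cfP_rev : ∀ (n : ℕ) (a : ℕ → R), cfP (fun i => a (n - 1 - i)) n = cfP a n := by
  refine two_step ?_ ?_ ?_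
  · intro a; rfl
  · intro a; rfl
  · intro n ih1 ih2 a
    rw [cfP_two]
    have e1 : cfP (fun i => a (n + 2 - 1 - i)) (n + 1)
        = cfP (fun i => (fun j => a (j + 1)) (n + 1 - 1 - i)) (n + 1) := by
      apply cfP_congr
      intro i hi
      simp only
      congr 1
      omega
    have e2 : cfP (fun i => a (n + 2 - 1 - i)) n
        = cfP (fun i => (fun j => a (j + 2)) (n - 1 - i)) n := by
      apply cfP_congr
      intro i hi
      simp only
      congr 1
      omega
    have h0 : a (n + 2 - 1 - (n + 1)) = a 0 := by congr 1; omega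
    rw [e1, e2, ih2 (fun j => a (j + 1)), ih1 (fun j => a (j + 2)), h0, cfP_left_rec]

lemma det_id (a : ℕ → R) :
    ∀ n, cfP a (n + 1) * cfQ a n - cfP a n * cfQ a (n + 1) = (-1) ^ (n + 1) := by
  intro n
  induction n with
  | zero => simp
  | succ k ih =>
    rw [show k + 1 + 1 = k + 2 from rfl, cfP_two, cfQ_two, pow_succ]
    linear_combination (-1 : R) * ih

lemma period_shift (a : ℕ → R) (m : ℕ) (hper : ∀ n, a (n + (m + 1)) = a n) :
    ∀ s, cfP a (s + (m + 1)) = cfP a (m + 1) * cfP a s + cfP a m * cfQ a s ∧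
      cfQ a (s + (m + 1)) = cfQ a (m + 1) * cfP a s + cfQ a m * cfQ a s := by
  refine two_step ?_ ?_ ?_
  · simp
  · have h0 : a (m + 1) = a 0 := by simpa using hper 0
    constructor
    · rw [show 1 + (m + 1) = m + 2 from by omega, cfP_two, h0]; simp; ring
    · rw [show 1 + (m + 1) = m + 2 from by omega, cfQ_two, h0]; simp; ring
  · intro s ih1 ih2
    have hidx : s + 2 + (m + 1) = (s + (m + 1)) + 2 := by omega
    have ha : a (s + (m + 1) + 1) = a (s + 1) := by
      rw [show s + (m + 1) + 1 = (s + 1) + (m + 1) from by omega]; exact hper (s + 1)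
    constructor
    · rw [hidx, cfP_two, ha, show s + (m+1) + 1 = (s+1) + (m+1) from by omega,
        ih1.1, ih2.1, cfP_two, cfQ_two]
      ring
    · rw [hidx, cfQ_two, ha, show s + (m+1) + 1 = (s+1) + (m+1) from by omega,
        ih1.2, ih2.2, cfP_two, cfQ_two]
      ring

lemma eventually_of_classes {k : ℕ} (hk : 0 < k) {p : ℕ → Prop}
    (h : ∀ j < k, ∀ᶠ i in atTop, p (k * i + j)) : ∀ᶠ n in atTop, p n := by
  have h' : ∀ j : Fin k, ∃ N, ∀ i ≥ N, p (k * i + j) := fun j => eventually_atTop.1 (h j j.2)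
  choose N hN using h'
  refine eventually_atTop.2 ⟨k * (Finset.univ.sup N + 1), fun n hn => ?_⟩
  have hj : n % k < k := Nat.mod_lt _ hk
  have hdiv : Finset.univ.sup N + 1 ≤ n / k := by
    rw [Nat.le_div_iff_mul_le hk]
    calc (Finset.univ.sup N + 1) * k = k * (Finset.univ.sup N + 1) := by ring
    _ ≤ n := hn
  have := hN ⟨n % k, hj⟩ (n / k)
    (le_trans (le_trans (Finset.le_sup (Finset.mem_univ (⟨n % k, hj⟩ : Fin k))) (Nat.le_succ _)) hdiv)
  simpa [Nat.div_add_mod] using this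

lemma tendsto_of_classes {k : ℕ} (hk : 0 < k) {f : ℕ → ℝ} {l : ℝ}
    (h : ∀ j < k, Tendsto (fun i => f (k * i + j)) atTop (nhds l)) :
    Tendsto f atTop (nhds l) := by
  rw [tendsto_def]
  intro U hU
  have : ∀ᶠ n in atTop, f n ∈ U :=
    eventually_of_classes hk (fun j hj => tendsto_def.mp (h j hj) U hU)
  exact this

end Aux

set_option maxHeartbeats 1000000 in
lemma main_core (K : Subfield ℝ) (m : ℕ) (A : ℕ → K)
    (hper : ∀ n, A (n + (m + 1)) = A n)
    (Δ : K)
    (hΔ : Δ = (cfP A (m + 1) - cfQ A m) ^ 2 + 4 * cfQ A (m + 1) * cfP A m)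
    (hΔpos : 0 < (Δ : ℝ)) (hΔns : ¬∃ y : K, y ^ 2 = Δ) :
    ∃ x : ℝ, (↑(cfQ A (m + 1)) : ℝ) * x ^ 2 -
        (↑(cfP A (m + 1) - cfQ A m : K) : ℝ) * x - (↑(cfP A m) : ℝ) = 0 ∧
      CFConvergesTo (fun n => (A n : ℝ)) x := by
  have h4 : ((4 : K) : ℝ) = 4 := by norm_cast
  have h2 : ((2 : K) : ℝ) = 2 := by norm_cast
  have hinj : ∀ z w : K, (z : ℝ) = (w : ℝ) → z = w := fun z w h => Subtype.coe_injective h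
  set a : ℕ → ℝ := fun n => ((A n : ℝ)) with ha
  have hPmap : ∀ n, cfP a n = ((cfP A n : K) : ℝ) := by
    intro n; simpa using cfP_map K.subtype A n
  have hQmap : ∀ n, cfQ a n = ((cfQ A n : K) : ℝ) := by
    intro n; simpa using cfQ_map K.subtype A n
  set p := cfP a (m + 1) with hpdef
  set pp := cfP a m with hppdef
  set q := cfQ a (m + 1) with hqdef
  set qq := cfQ a m with hqqdef
  have hpK : p = ((cfP A (m + 1) : K) : ℝ) := hPmap (m + 1)
  have hppK : pp = ((cfP A m : K) : ℝ) := hPmap m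
  have hqK : q = ((cfQ A (m + 1) : K) : ℝ) := hQmap (m + 1)
  have hqqK : qq = ((cfQ A m : K) : ℝ) := hQmap m
  have hD : (Δ : ℝ) = (p - qq) ^ 2 + 4 * q * pp := by
    rw [hΔ, hpK, hppK, hqK, hqqK]; push_cast [h4]; ring
  -- q ≠ 0
  have hq : q ≠ 0 := by
    intro h0
    have hK0 : (cfQ A (m + 1) : K) = 0 := by
      apply hinj _ 0; rw [← hqK, h0]; simp
    exact hΔns ⟨cfP A (m + 1) - cfQ A m, by rw [hΔ, hK0]; ring⟩
  -- t ≠ 0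
  set t := p + qq with htdef
  have ht : t ≠ 0 := by
    intro h0
    have hK0 : (cfP A (m + 1) : K) + cfQ A m = 0 := by
      apply hinj _ 0
      have : ((cfP A (m + 1) + cfQ A m : K) : ℝ) = 0 := by
        push_cast; rw [← hpK, ← hqqK]; simpa [htdef] using h0
      simpa using this
    have hdK' : cfP A (m + 1) * cfQ A m - cfP A m * cfQ A (m + 1) = -(-1 : K) ^ m := by
      rw [det_id A m, pow_succ]; ring
    have hΔval : Δ = 4 * (-1 : K) ^ m := by
      rw [hΔ]
      linear_combination (cfP A (m + 1) + cfQ A m) * hK0 - 4 * hdK'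
    rcases Nat.even_or_odd m with he | ho
    · exact hΔns ⟨2, by rw [hΔval, he.neg_one_pow]; norm_num⟩
    · have hneg : Δ = -4 := by rw [hΔval, ho.neg_one_pow]; ring
      rw [hneg] at hΔpos
      have h4' : ((-4 : K) : ℝ) = -4 := by norm_cast
      rw [h4'] at hΔpos
      norm_num at hΔpos
  -- square root setup
  set u := Real.sqrt (Δ : ℝ) with hudef
  have hu2 : u ^ 2 = (Δ : ℝ) := Real.sq_sqrt hΔpos.le
  have hupos : 0 < u := Real.sqrt_pos.2 hΔpos
  set s := if 0 < t then u else -u with hsdef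
  have hs2 : s ^ 2 = (Δ : ℝ) := by
    by_cases h : 0 < t <;> simp only [hsdef, h, if_true, if_false, neg_sq] <;> exact hu2
  have hst : 0 < s * t := by
    by_cases h : 0 < t
    · simp only [hsdef, if_pos h]; exact mul_pos hupos h
    · have hlt : t < 0 := lt_of_le_of_ne (not_lt.1 h) ht
      simp only [hsdef, if_neg h]; nlinarith
  have hsne : s ≠ 0 := by
    intro h0; rw [h0] at hs2; norm_num at hs2; rw [← hs2] at hΔpos; norm_num at hΔpos
  have hs2' : s ^ 2 = (p - qq) ^ 2 + 4 * q * pp := by rw [hs2, hD]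
  set lam := (t + s) / 2 with hlamdef
  set mu := (t - s) / 2 with hmudef
  have hsum : lam + mu = p + qq := by rw [hlamdef, hmudef, htdef]; ring
  have hdiff : lam - mu = s := by rw [hlamdef, hmudef]; ring
  have hlm : lam * mu = p * qq - pp * q := by
    rw [hlamdef, hmudef, htdef]
    linear_combination (-(1 : ℝ) / 4) * hs2'
  set x := (lam - qq) / q with hxdef
  set y := (mu - qq) / q with hydef
  have hqx : q * x = lam - qq := by rw [hxdef]; field_simp
  have hqy : q * y = mu - qq := by rw [hydef]; field_simp
  have hA : p - x * q = mu := by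
    apply mul_left_cancel₀ hq
    linear_combination (-q) * hqx + (-q) * hsum
  have hB : pp - x * qq = -(x * mu) := by
    apply mul_left_cancel₀ hq
    linear_combination (mu - qq) * hqx + hlm - qq * hsum
  have hA' : p - y * q = lam := by
    apply mul_left_cancel₀ hq
    linear_combination (-q) * hqy + (-q) * hsum
  have hB' : pp - y * qq = -(y * lam) := by
    apply mul_left_cancel₀ hq
    linear_combination (lam - qq) * hqy + hlm - qq * hsum
  have hroot : q * x ^ 2 - (p - qq) * x - pp = 0 := by
    linear_combination (-x) * hA - hB
  have hxysub : x - y ≠ 0 := by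
    intro h0
    have : q * x - q * y = 0 := by rw [← mul_sub, h0, mul_zero]
    rw [hqx, hqy] at this
    exact hsne (by linarith [hdiff])
  -- eigenvalue dominance
  have hsq : mu ^ 2 < lam ^ 2 := by
    have hls : lam ^ 2 - mu ^ 2 = s * t := by rw [hlamdef, hmudef]; ring
    linarith
  have hlam_ne : lam ≠ 0 := by
    intro h0; rw [h0] at hsq; nlinarith [sq_nonneg mu]
  have hrho : |mu / lam| < 1 := by
    have h1 : (mu / lam) ^ 2 < 1 := by
      rw [div_pow, div_lt_one (lt_of_le_of_lt (sq_nonneg mu) hsq)]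
      exact hsq
    exact (sq_lt_one_iff_abs_lt_one (a := mu / lam)).mp h1
  -- the sequences r and s
  set rr : ℕ → ℝ := fun n => cfP a n - x * cfQ a n with hrr
  set ss : ℕ → ℝ := fun n => cfP a n - y * cfQ a n with hss
  have hpera : ∀ n, a (n + (m + 1)) = a n := by
    intro n
    show ((A (n + (m + 1)) : K) : ℝ) = ((A n : K) : ℝ)
    rw [hper n]
  have hstar := period_shift a m hpera
  have hrec_r : ∀ n, rr (n + (m + 1)) = mu * rr n := by
    intro n
    simp only [hrr]
    rw [(hstar n).1, (hstar n).2]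
    linear_combination (cfP a n) * hA + (cfQ a n) * hB
  have hrec_s : ∀ n, ss (n + (m + 1)) = lam * ss n := by
    intro n
    simp only [hss]
    rw [(hstar n).1, (hstar n).2]
    linear_combination (cfP a n) * hA' + (cfQ a n) * hB'
  have hpow_r : ∀ j k, rr (j + k * (m + 1)) = mu ^ k * rr j := by
    intro j k
    induction k with
    | zero => simp
    | succ i ih =>
      have he : j + (i + 1) * (m + 1) = (j + i * (m + 1)) + (m + 1) := by ring
      rw [he, hrec_r, ih, pow_succ]; ring
  have hpow_s : ∀ j k, ss (j + k * (m + 1)) = lam ^ k * ss j := by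
    intro j k
    induction k with
    | zero => simp
    | succ i ih =>
      have he : j + (i + 1) * (m + 1) = (j + i * (m + 1)) + (m + 1) := by ring
      rw [he, hrec_s, ih, pow_succ]; ring
  -- ss never vanishes
  have hss_ne : ∀ j, ss j ≠ 0 := by
    intro j h0
    by_cases hQ0 : cfQ a j = 0
    · have hP0 : cfP a j = 0 := by simpa [hss, hQ0] using h0
      have hd := det_id a j
      rw [hP0, hQ0] at hd
      simp only [mul_zero, zero_mul, sub_zero, zero_sub] at hd
      have : ((-1 : ℝ)) ^ (j + 1) ≠ 0 := pow_ne_zero _ (by norm_num)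
      exact this (by linarith)
    · have hy' : y = cfP a j / cfQ a j := by
        rw [eq_div_iff hQ0]
        have : cfP a j - y * cfQ a j = 0 := by simpa [hss] using h0
        linarith
      have hyK : y = ((cfP A j / cfQ A j : K) : ℝ) := by
        rw [hy', hPmap j, hQmap j]; push_cast; ring
      set z : K := cfP A j / cfQ A j with hzdef
      apply hΔns
      refine ⟨(cfP A (m + 1) - cfQ A m) - 2 * cfQ A (m + 1) * z, ?_⟩
      apply hinj _ Δ
      have hsy : (p - qq) - 2 * (q * y) = s := by
        linear_combination (-2 : ℝ) * hqy + (-2 : ℝ) * hmudef + (-1 : ℝ) * htdef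
      show ((((cfP A (m + 1) - cfQ A m) - 2 * cfQ A (m + 1) * z : K)) : ℝ) ^ 2 = (Δ : ℝ)
      push_cast [h2]
      rw [← hpK, ← hqqK, ← hqK, ← hyK]
      linear_combination ((p - qq - 2 * (q * y)) + s) * hsy + hs2
  -- per-class convergence facts
  have hmi : ∀ i : ℕ, mu ^ i = lam ^ i * (mu / lam) ^ i := by
    intro i
    have hne : lam ^ i ≠ 0 := pow_ne_zero i hlam_ne
    rw [div_pow mu lam i, mul_div_assoc' (lam ^ i) (mu ^ i) (lam ^ i), mul_div_cancel_left₀ (mu ^ i) hne]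
  have htend0 : ∀ j : ℕ, Tendsto (fun i => (mu / lam) ^ i * rr j) atTop (nhds 0) := by
    intro j
    simpa using (tendsto_pow_atTop_nhds_zero_of_abs_lt_one hrho).mul_const (rr j)
  have hQexp : ∀ j i : ℕ, (x - y) * cfQ a ((m + 1) * i + j + 1)
      = lam ^ i * (ss (j + 1) - (mu / lam) ^ i * rr (j + 1)) := by
    intro j i
    have hidx : (m + 1) * i + j + 1 = (j + 1) + i * (m + 1) := by ring
    have hQs : ss ((j + 1) + i * (m + 1)) - rr ((j + 1) + i * (m + 1))
        = (x - y) * cfQ a ((j + 1) + i * (m + 1)) := by simp only [hss, hrr]; ring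
    rw [hidx, ← hQs, hpow_s, hpow_r, hmi i]; ring
  have hPexp : ∀ j i : ℕ, (x - y) * cfP a ((m + 1) * i + j + 1)
      = lam ^ i * (x * ss (j + 1) - y * ((mu / lam) ^ i * rr (j + 1))) := by
    intro j i
    have hidx : (m + 1) * i + j + 1 = (j + 1) + i * (m + 1) := by ring
    have hPs : x * ss ((j + 1) + i * (m + 1)) - y * rr ((j + 1) + i * (m + 1))
        = (x - y) * cfP a ((j + 1) + i * (m + 1)) := by simp only [hss, hrr]; ring
    rw [hidx, ← hPs, hpow_s, hpow_r, hmi i]; ring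
  have hev : ∀ j : ℕ, ∀ᶠ i in atTop, ss (j + 1) - (mu / lam) ^ i * rr (j + 1) ≠ 0 := by
    intro j
    have h1 := (htend0 (j + 1)).eventually_ne (Ne.symm (hss_ne (j + 1)))
    filter_upwards [h1] with i hi
    exact sub_ne_zero_of_ne (Ne.symm hi)
  have hQne : ∀ j : ℕ, ∀ᶠ i in atTop, cfQ a ((m + 1) * i + j + 1) ≠ 0 := by
    intro j
    filter_upwards [hev j] with i hi h0
    have := hQexp j i
    rw [h0, mul_zero] at this
    exact mul_ne_zero (pow_ne_zero i hlam_ne) hi this.symm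
  have hclass : ∀ j : ℕ, Tendsto
      (fun i => cfP a ((m + 1) * i + j + 1) / cfQ a ((m + 1) * i + j + 1)) atTop (nhds x) := by
    intro j
    have hnum : Tendsto (fun i => x * ss (j + 1) - y * ((mu / lam) ^ i * rr (j + 1)))
        atTop (nhds (x * ss (j + 1) - y * 0)) :=
      tendsto_const_nhds.sub ((htend0 (j + 1)).const_mul y)
    have hden : Tendsto (fun i => ss (j + 1) - (mu / lam) ^ i * rr (j + 1))
        atTop (nhds (ss (j + 1) - 0)) :=
      tendsto_const_nhds.sub (htend0 (j + 1))
    have hdiv := hnum.div hden (by simpa using hss_ne (j + 1))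
    have hlimit : (x * ss (j + 1) - y * 0) / (ss (j + 1) - 0) = x := by
      rw [mul_zero, sub_zero, sub_zero, mul_div_assoc, div_self (hss_ne (j + 1)), mul_one]
    rw [hlimit] at hdiv
    refine hdiv.congr' ?_
    filter_upwards [hev j] with i hi
    calc (x * ss (j + 1) - y * ((mu / lam) ^ i * rr (j + 1)))
          / (ss (j + 1) - (mu / lam) ^ i * rr (j + 1))
        = (lam ^ i * (x * ss (j + 1) - y * ((mu / lam) ^ i * rr (j + 1))))
          / (lam ^ i * (ss (j + 1) - (mu / lam) ^ i * rr (j + 1))) :=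
          (mul_div_mul_left _ _ (pow_ne_zero i hlam_ne)).symm
      _ = ((x - y) * cfP a ((m + 1) * i + j + 1)) / ((x - y) * cfQ a ((m + 1) * i + j + 1)) := by
          rw [hPexp j i, hQexp j i]
      _ = cfP a ((m + 1) * i + j + 1) / cfQ a ((m + 1) * i + j + 1) :=
          mul_div_mul_left _ _ hxysub
  refine ⟨x, ?_, ?_, ?_⟩
  · rw [← hqK, ← hppK]
    have : ((cfP A (m + 1) - cfQ A m : K) : ℝ) = p - qq := by
      push_cast; rw [← hpK, ← hqqK]
    rw [this]
    exact hroot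
  · -- eventual nonvanishing of denominators
    have hall : ∀ᶠ n in atTop, cfQ a (n + 1) ≠ 0 := by
      apply eventually_of_classes (k := m + 1) (by omega) (p := fun n => cfQ a (n + 1) ≠ 0)
      intro j hj
      exact hQne j
    exact eventually_atTop.1 hall
  · apply tendsto_of_classes (k := m + 1) (by omega)
    intro j hj
    exact hclass j

/-- a purely periodic continued fraction `[overline(α₀,…,α_m)]` with positive
non-square discriminant converges to a root of `q_m x² − (p_m − q_{m−1})x − p_{m−1} = 0`,
and its reversal `[overline(α_m,…,α₀)]` converges to a root of
`−p_{m−1} x² + (p_m − q_{m−1})x + q_m = 0`. -/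
theorem purely_periodic_and_reversed_converge
    (K : Subfield ℝ) (hK : Module.finrank ℚ K = 2)
    (m : ℕ) (α : ℕ → K) (hα : ∀ i ≤ m, IsIntegral ℤ (α i))
    (b c : ℕ → K)
    (hb : ∀ n, b n = α (n % (m + 1)))
    (hc : ∀ n, c n = α (m - n % (m + 1)))
    (Δ : K)
    (hΔ : Δ = (cfP b (m + 1) - cfQ b m) ^ 2 + 4 * cfQ b (m + 1) * cfP b m)
    (hΔpos : 0 < (↑Δ : ℝ)) (hΔns : ¬∃ y : K, y ^ 2 = Δ) :
    (∃ x : ℝ, (↑(cfQ b (m + 1)) : ℝ) * x ^ 2 -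
        (↑(cfP b (m + 1) - cfQ b m : ↥K) : ℝ) * x - (↑(cfP b m) : ℝ) = 0 ∧
      CFConvergesTo (fun n => (b n : ℝ)) x) ∧
    (∃ x : ℝ, -(↑(cfP b m) : ℝ) * x ^ 2 +
        (↑(cfP b (m + 1) - cfQ b m : ↥K) : ℝ) * x + (↑(cfQ b (m + 1)) : ℝ) = 0 ∧
      CFConvergesTo (fun n => (c n : ℝ)) x) := by
  have hbper : ∀ n, b (n + (m + 1)) = b n := by
    intro n; rw [hb, hb, Nat.add_mod_right]
  have hcper : ∀ n, c (n + (m + 1)) = c n := by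
    intro n; rw [hc, hc, Nat.add_mod_right]
  have hcb : ∀ i, i ≤ m → c i = b (m - i) := by
    intro i hi
    rw [hc, hb, Nat.mod_eq_of_lt (by omega : i < m + 1),
      Nat.mod_eq_of_lt (by omega : m - i < m + 1)]
  have h1 : cfP c (m + 1) = cfP b (m + 1) := by
    have e : cfP c (m + 1) = cfP (fun i => b ((m + 1) - 1 - i)) (m + 1) := by
      apply cfP_congr
      intro i hi
      rw [hcb i (by omega)]
      first
      | rfl
      | (congr 1; omega)
    rw [e]
    exact cfP_rev (m + 1) b
  have h2 : cfQ c (m + 1) = cfP b m := by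
    rw [cfQ_shift c m]
    have e : cfP (fun i => c (i + 1)) m = cfP (fun i => b (m - 1 - i)) m := by
      apply cfP_congr
      intro i hi
      show c (i + 1) = b (m - 1 - i)
      rw [hcb (i + 1) (by omega)]
      first
      | rfl
      | (congr 1; omega)
    rw [e]
    exact cfP_rev m b
  have h3 : cfP c m = cfQ b (m + 1) := by
    rw [cfQ_shift b m]
    have e : cfP c m = cfP (fun i => (fun j => b (j + 1)) (m - 1 - i)) m := by
      apply cfP_congr
      intro i hi
      show c i = b (m - 1 - i + 1)
      rw [hcb i (by omega)]
      first
      | rfl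
      | (congr 1; omega)
    rw [e]
    exact cfP_rev m (fun j => b (j + 1))
  have h4 : cfQ c m = cfQ b m := by
    by_cases hm : m = 0
    · subst hm; rfl
    · obtain ⟨m', rfl⟩ : ∃ m', m = m' + 1 := ⟨m - 1, by omega⟩
      rw [cfQ_shift c m', cfQ_shift b m']
      have e : cfP (fun i => c (i + 1)) m'
          = cfP (fun i => (fun j => b (j + 1)) (m' - 1 - i)) m' := by
        apply cfP_congr
        intro i hi
        show c (i + 1) = b (m' - 1 - i + 1)
        rw [hcb (i + 1) (by omega)]
        congr 1
        omega
      rw [e]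
      exact cfP_rev m' (fun j => b (j + 1))
  obtain ⟨x1, hx1root, hx1conv⟩ := main_core K m b hbper Δ hΔ hΔpos hΔns
  have hΔc : Δ = (cfP c (m + 1) - cfQ c m) ^ 2 + 4 * cfQ c (m + 1) * cfP c m := by
    rw [h1, h2, h3, h4, hΔ]; ring
  obtain ⟨x2, hx2root, hx2conv⟩ := main_core K m c hcper Δ hΔc hΔpos hΔns
  refine ⟨⟨x1, hx1root, hx1conv⟩, ⟨x2, ?_, hx2conv⟩⟩
  rw [h1, h2, h3, h4] at hx2root
  linarith [hx2root]
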